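/- Let (𝒫,𝓛) be a canonical horizontal shadow representation in general position such that the graph G(𝒫,𝓛) is connected. Then there exists a dominating set D of 𝒫 ∪ 𝓛 of minimum cardinality that is normalized, i.e., (N(p) ∪ H(p)) ∩ D = ∅ for every p ∈ D ∩ 𝒫, and D ∩ 𝒫 ⊆ 𝒫* where 𝒫* := {p ∈ 𝒫 : p ∉ S_{p′} for every p′ ∈ 𝒫 ∖ {p}}. -/

import Mathlib

open Set

abbrev Pt : Type := ℝ × ℝ

/-- The shadow of a point `t`. -/
def ptShadow (t : Pt) : Set Pt := {p : Pt | p.1 ≤ t.1 ∧ p.2 - p.1 ≤ t.2 - t.1}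

/-- The shadow of a set of points. -/
def setShadow (L : Set Pt) : Set Pt := ⋃ t ∈ L, ptShadow t

/-- The reverse shadow of a point `t`. -/
def ptRevShadow (t : Pt) : Set Pt := {p : Pt | t.1 ≤ p.1 ∧ t.2 - t.1 ≤ p.2 - p.1}

/-- The reverse shadow of a set of points. -/
def setRevShadow (L : Set Pt) : Set Pt := ⋃ t ∈ L, ptRevShadow t

/-- The region `A_t`. -/
def regionA (t : Pt) : Set Pt := {p : Pt | t.1 ≤ p.1 ∧ p.2 - p.1 ≤ t.2 - t.1}

/-- The region `B_t`. -/
def regionB (t : Pt) : Set Pt := {p : Pt | p.1 ≤ t.1 ∧ t.2 - t.1 ≤ p.2 - p.1}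

/-- `s ∧ t := (s₁, s₁ + t₂ − t₁)`. -/
def diagMeet (s t : Pt) : Pt := (s.1, s.1 + t.2 - t.1)

/-- A closed horizontal line segment, given by its left and right endpoints. -/
structure HSeg where
  l : Pt
  r : Pt
  horiz : l.2 = r.2
  le : l.1 ≤ r.1

/-- The set of points of a horizontal segment. -/
def HSeg.carrier (L : HSeg) : Set Pt := segment ℝ L.l L.r

/-- An element of a horizontal shadow representation: a point or a segment. -/
inductive Elem where
  | pt : Pt → Elem
  | seg : HSeg → Elem

/-- The set of points of the plane occupied by an element. -/
def Elem.carrier : Elem → Set Pt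
  | .pt p => ({p} : Set Pt)
  | .seg L => L.carrier

/-- Adjacency between elements: two points are never adjacent; a point `p` and a
segment `L` are adjacent iff `p ∈ S_L`; two segments `L, L'` are adjacent iff
`L ∩ S_{L'} ≠ ∅` or `L' ∩ S_L ≠ ∅`. -/
def ElemAdj : Elem → Elem → Prop
  | .pt _, .pt _ => False
  | .pt p, .seg L => p ∈ setShadow L.carrier
  | .seg L, .pt p => p ∈ setShadow L.carrier
  | .seg L, .seg L' =>
      (L.carrier ∩ setShadow L'.carrier).Nonempty ∨ (L'.carrier ∩ setShadow L.carrier).Nonempty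

/-- `x` is dominated by the set `D`: it belongs to `D` or is adjacent to a member of `D`. -/
def DominatedBy (D : Set Elem) (x : Elem) : Prop := x ∈ D ∨ ∃ d ∈ D, ElemAdj x d

/-- `D` dominates `X`. -/
def Dominates (D X : Set Elem) : Prop := ∀ x ∈ X, DominatedBy D x

/-- A horizontal shadow representation: a finite set of points and a finite set of
closed horizontal segments. -/
structure HSR where
  P : Set Pt
  Ls : Set HSeg
  finP : P.Finite
  finL : Ls.Finite

/-- The elements (points and segments) of a representation. -/
def HSR.elems (R : HSR) : Set Elem := (Elem.pt '' R.P) ∪ (Elem.seg '' R.Ls)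

/-- All points of `𝒫` together with all endpoints of segments of `𝓛`. -/
def HSR.keyPts (R : HSR) : Set Pt := R.P ∪ ⋃ L ∈ R.Ls, ({L.l, L.r} : Set Pt)

/-- General position: all points of `𝒫` and all endpoints of segments of `𝓛` have
pairwise distinct first coordinates and pairwise distinct values of
(second coordinate minus first coordinate). -/
def GenPos (R : HSR) : Prop :=
  ∀ s ∈ R.keyPts, ∀ t ∈ R.keyPts, s ≠ t → s.1 ≠ t.1 ∧ s.2 - s.1 ≠ t.2 - t.1

/-- `(L_j, L_{j'})` is a left-crossing pair. -/
def LeftCrossing (Lj Lj' : HSeg) : Prop := Lj.l ∈ ptShadow Lj'.l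

/-- `(L_i, L_{i'})` is a right-crossing pair. -/
def RightCrossing (Li Li' : HSeg) : Prop := Li'.r ∈ ptShadow Li.r

/-- `𝓛^right_{j,j′}`. -/
def LRightPair (R : HSR) (Lj Lj' : HSeg) : Set Elem :=
  {x | x ∈ R.elems ∧ Elem.carrier x ⊆ regionA (diagMeet Lj.l Lj'.l)}

/-- `𝓛^left_{i,i′}`. -/
def LLeftPair (R : HSR) (Li Li' : HSeg) : Set Elem :=
  {x | x ∈ R.elems ∧ Elem.carrier x ⊆ regionB (diagMeet Li.r Li'.r)}

/-- Adjacency of elements is symmetric. -/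
lemma elemAdj_symm : ∀ {x y : Elem}, ElemAdj x y → ElemAdj y x := by
  intro x y h
  match x, y with
  | .pt _, .pt _ => exact h.elim
  | .pt _, .seg _ => exact h
  | .seg _, .pt _ => exact h
  | .seg _, .seg _ => exact h.symm

/-- The graph `G(𝒫,𝓛)` on the elements of the representation. -/
def graphOf (R : HSR) : SimpleGraph R.elems where
  Adj x y := x ≠ y ∧ ElemAdj x.1 y.1
  symm := by
    constructor
    intro x y h
    exact ⟨h.1.symm, elemAdj_symm h.2⟩
  loopless := by
    constructor
    intro x h
    exact h.1 rfl

/-- The neighbourhood `N(p)` of a point `p`, as a set of elements. -/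
def NElemSet (R : HSR) (p : Pt) : Set Elem :=
  {x | ∃ L ∈ R.Ls, p ∈ setShadow L.carrier ∧ x = Elem.seg L}

/-- The hovering set `H(p)` of a point `p`, as a set of elements. -/
def HoverSet (R : HSR) (p : Pt) : Set Elem :=
  {x | (∃ p' ∈ R.P, p' ≠ p ∧ p' ∈ ptShadow p ∧ x = Elem.pt p') ∨
    (∃ L ∈ R.Ls, (L.carrier ∩ ptShadow p).Nonempty ∧ p ∉ setShadow L.carrier ∧
      x = Elem.seg L)}

/-- A representation is canonical if every point has a segment in its hovering set. -/
def Canonical (R : HSR) : Prop := ∀ p ∈ R.P, ∃ L ∈ R.Ls, Elem.seg L ∈ HoverSet R p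

/-- The set `𝒫*` of points of `𝒫` which lie in no shadow of another point of `𝒫`. -/
def Pstar (R : HSR) : Set Pt :=
  {p | p ∈ R.P ∧ ∀ p' ∈ R.P, p' ≠ p → p ∉ ptShadow p'}


section Stmt19Aux

lemma ptShadow_trans {q p t : Pt} (h1 : q ∈ ptShadow p) (h2 : p ∈ ptShadow t) :
    q ∈ ptShadow t :=
  ⟨h1.1.trans h2.1, h1.2.trans h2.2⟩

lemma mem_setShadow_iff {q : Pt} {C : Set Pt} :
    q ∈ setShadow C ↔ ∃ t ∈ C, q ∈ ptShadow t := by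
  simp [setShadow]

lemma setShadow_down {q p : Pt} {C : Set Pt} (h : q ∈ ptShadow p)
    (hp : p ∈ setShadow C) : q ∈ setShadow C := by
  obtain ⟨t, ht, hpt⟩ := mem_setShadow_iff.1 hp
  exact mem_setShadow_iff.2 ⟨t, ht, ptShadow_trans h hpt⟩

lemma elems_pt_mem {R : HSR} {p : Pt} (h : Elem.pt p ∈ R.elems) : p ∈ R.P := by
  rcases h with ⟨q, hq, heq⟩ | ⟨L, hL, heq⟩
  · cases heq; exact hq
  · cases heq

/-- A segment containing a point below `p` is adjacent to every segment whose shadow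
contains `p`. -/
lemma hover_adj {Lc L' : HSeg} {p z : Pt} (hzL : z ∈ Lc.carrier) (hz : z ∈ ptShadow p)
    (hp : p ∈ setShadow L'.carrier) : ElemAdj (Elem.seg L') (Elem.seg Lc) :=
  Or.inr ⟨z, hzL, setShadow_down hz hp⟩

/-- One-point swap: replace a point of a dominating set by a segment. -/
lemma swap_one (R : HSR) (hfin : R.elems.Finite) {D : Set Elem} (hDsub : D ⊆ R.elems)
    (hdom : Dominates D R.elems) {p : Pt} (hpD : Elem.pt p ∈ D)
    {Lnew : HSeg} (hLnew : Lnew ∈ R.Ls)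
    (hcovp : ∃ d ∈ insert (Elem.seg Lnew) (D \ {Elem.pt p}), ElemAdj (Elem.pt p) d)
    {Lcov : HSeg} (hLcovD : Elem.seg Lcov ∈ insert (Elem.seg Lnew) (D \ {Elem.pt p}))
    (hz : ∃ z ∈ Lcov.carrier, z ∈ ptShadow p) :
    ∃ D' : Set Elem, D' ⊆ R.elems ∧ Dominates D' R.elems ∧ D'.ncard ≤ D.ncard ∧
      (D' ∩ Set.range Elem.pt).ncard < (D ∩ Set.range Elem.pt).ncard := by
  classical
  have hDfin : D.Finite := hfin.subset hDsub
  set D' : Set Elem := insert (Elem.seg Lnew) (D \ {Elem.pt p}) with hD'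
  refine ⟨D', ?_, ?_, ?_, ?_⟩
  · exact insert_subset (Or.inr ⟨Lnew, hLnew, rfl⟩) ((diff_subset).trans hDsub)
  · intro x hx
    rcases hdom x hx with hxD | ⟨d, hdD, hadj⟩
    · by_cases hxp : x = Elem.pt p
      · subst hxp; exact Or.inr hcovp
      · exact Or.inl (mem_insert_of_mem _ ⟨hxD, hxp⟩)
    · by_cases hdp : d = Elem.pt p
      · subst hdp
        match x, hadj with
        | Elem.seg L', hadj =>
          obtain ⟨z, hzL, hzp⟩ := hz
          exact Or.inr ⟨Elem.seg Lcov, hLcovD, hover_adj hzL hzp hadj⟩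
      · exact Or.inr ⟨d, mem_insert_of_mem _ ⟨hdD, hdp⟩, hadj⟩
  · have h1 : (D \ {Elem.pt p}).ncard = D.ncard - 1 :=
      Set.ncard_diff_singleton_of_mem hpD
    have h2 : D'.ncard ≤ (D \ {Elem.pt p}).ncard + 1 := Set.ncard_insert_le _ _
    have h3 : 1 ≤ D.ncard := (Set.ncard_pos hDfin).2 ⟨_, hpD⟩
    omega
  · have hsub : D' ∩ Set.range Elem.pt ⊆ (D ∩ Set.range Elem.pt) \ {Elem.pt p} := by
      rintro y ⟨hy1, hy2⟩
      rcases hy1 with rfl | ⟨hyD, hyp⟩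
      · obtain ⟨q, hq⟩ := hy2; cases hq
      · exact ⟨⟨hyD, hy2⟩, hyp⟩
    have hfin2 : (D ∩ Set.range Elem.pt).Finite := hDfin.inter_of_left _
    have hmem : Elem.pt p ∈ D ∩ Set.range Elem.pt := ⟨hpD, ⟨p, rfl⟩⟩
    have h1 : ((D ∩ Set.range Elem.pt) \ {Elem.pt p}).ncard
        = (D ∩ Set.range Elem.pt).ncard - 1 :=
      Set.ncard_diff_singleton_of_mem hmem
    have h2 := Set.ncard_le_ncard hsub hfin2.diff
    have h3 : 1 ≤ (D ∩ Set.range Elem.pt).ncard :=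
      (Set.ncard_pos hfin2).2 ⟨_, hmem⟩
    omega

/-- Two-point swap: replace two comparable points of a dominating set by two segments. -/
lemma swap_two (R : HSR) (hfin : R.elems.Finite) {D : Set Elem} (hDsub : D ⊆ R.elems)
    (hdom : Dominates D R.elems) {a b : Pt} (hab : a ≠ b) (haD : Elem.pt a ∈ D)
    (hbD : Elem.pt b ∈ D) (hle : a ∈ ptShadow b)
    {L0 : HSeg} (hL0 : L0 ∈ R.Ls) (hbL0 : b ∈ setShadow L0.carrier)
    {Lh : HSeg} (hLh : Lh ∈ R.Ls) (hz : ∃ z ∈ Lh.carrier, z ∈ ptShadow a) :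
    ∃ D' : Set Elem, D' ⊆ R.elems ∧ Dominates D' R.elems ∧ D'.ncard ≤ D.ncard ∧
      (D' ∩ Set.range Elem.pt).ncard < (D ∩ Set.range Elem.pt).ncard := by
  classical
  have hDfin : D.Finite := hfin.subset hDsub
  have hne : Elem.pt a ≠ Elem.pt b := fun h => hab (by cases h; rfl)
  have haL0 : a ∈ setShadow L0.carrier := setShadow_down hle hbL0
  set S : Set Elem := D \ {Elem.pt a, Elem.pt b} with hS
  set D' : Set Elem := insert (Elem.seg L0) (insert (Elem.seg Lh) S) with hD'
  have hLh' : Elem.seg Lh ∈ D' := mem_insert_of_mem _ (mem_insert _ _)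
  refine ⟨D', ?_, ?_, ?_, ?_⟩
  · refine insert_subset (Or.inr ⟨L0, hL0, rfl⟩)
      (insert_subset (Or.inr ⟨Lh, hLh, rfl⟩) ((diff_subset).trans hDsub))
  · intro x hx
    rcases hdom x hx with hxD | ⟨d, hdD, hadj⟩
    · by_cases hxa : x = Elem.pt a
      · subst hxa; exact Or.inr ⟨Elem.seg L0, mem_insert _ _, haL0⟩
      · by_cases hxb : x = Elem.pt b
        · subst hxb; exact Or.inr ⟨Elem.seg L0, mem_insert _ _, hbL0⟩
        · exact Or.inl (mem_insert_of_mem _ (mem_insert_of_mem _ ⟨hxD, by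
            simp only [mem_insert_iff, mem_singleton_iff]; tauto⟩))
    · by_cases hda : d = Elem.pt a
      · subst hda
        match x, hadj with
        | Elem.seg L', hadj =>
          obtain ⟨z, hzL, hzp⟩ := hz
          exact Or.inr ⟨Elem.seg Lh, hLh', hover_adj hzL hzp hadj⟩
      · by_cases hdb : d = Elem.pt b
        · subst hdb
          match x, hadj with
          | Elem.seg L', hadj =>
            obtain ⟨z, hzL, hzp⟩ := hz
            exact Or.inr ⟨Elem.seg Lh, hLh',
              hover_adj hzL hzp (setShadow_down hle hadj)⟩
        · exact Or.inr ⟨d, mem_insert_of_mem _ (mem_insert_of_mem _ ⟨hdD, by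
            simp only [mem_insert_iff, mem_singleton_iff]; tauto⟩), hadj⟩
  · have hSeq : S = (D \ {Elem.pt a}) \ {Elem.pt b} := by
      rw [hS, diff_diff]; rfl
    have hb' : Elem.pt b ∈ D \ {Elem.pt a} := ⟨hbD, fun h => hne (by
      simpa using h.symm)⟩
    have h1 : (D \ {Elem.pt a}).ncard = D.ncard - 1 :=
      Set.ncard_diff_singleton_of_mem haD
    have h2 : ((D \ {Elem.pt a}) \ {Elem.pt b}).ncard = (D \ {Elem.pt a}).ncard - 1 :=
      Set.ncard_diff_singleton_of_mem hb'
    have h3 : D'.ncard ≤ (insert (Elem.seg Lh) S).ncard + 1 := Set.ncard_insert_le _ _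
    have h4 : (insert (Elem.seg Lh) S).ncard ≤ S.ncard + 1 := Set.ncard_insert_le _ _
    have h5 : 2 ≤ D.ncard := by
      have := Set.ncard_le_ncard (by
        rintro y (rfl | rfl); exacts [haD, hbD] :
        ({Elem.pt a, Elem.pt b} : Set Elem) ⊆ D) hDfin
      rwa [Set.ncard_pair hne] at this
    have h6 : S.ncard = D.ncard - 2 := by rw [hSeq]; omega
    omega
  · have hsub : D' ∩ Set.range Elem.pt ⊆ (D ∩ Set.range Elem.pt) \ {Elem.pt a} := by
      rintro y ⟨hy1, hy2⟩
      rcases hy1 with rfl | hy1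
      · obtain ⟨q, hq⟩ := hy2; cases hq
      rcases hy1 with rfl | ⟨hyD, hyp⟩
      · obtain ⟨q, hq⟩ := hy2; cases hq
      · refine ⟨⟨hyD, hy2⟩, fun h => hyp ?_⟩
        simp only [mem_singleton_iff] at h
        simp [h]
    have hfin2 : (D ∩ Set.range Elem.pt).Finite := hDfin.inter_of_left _
    have hmem : Elem.pt a ∈ D ∩ Set.range Elem.pt := ⟨haD, ⟨a, rfl⟩⟩
    have h1 : ((D ∩ Set.range Elem.pt) \ {Elem.pt a}).ncard
        = (D ∩ Set.range Elem.pt).ncard - 1 :=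
      Set.ncard_diff_singleton_of_mem hmem
    have h2 := Set.ncard_le_ncard hsub hfin2.diff
    have h3 : 1 ≤ (D ∩ Set.range Elem.pt).ncard :=
      (Set.ncard_pos hfin2).2 ⟨_, hmem⟩
    omega

end Stmt19Aux

/-- Every connected canonical horizontal shadow representation in
general position admits a normalized minimum dominating set. -/
theorem stmt19 (R : HSR) (hgp : GenPos R) (hcan : Canonical R)
    (hconn : (graphOf R).Connected) :
    ∃ D : Set Elem, D ⊆ R.elems ∧ Dominates D R.elems ∧
      (∀ D' : Set Elem, D' ⊆ R.elems → Dominates D' R.elems → D.ncard ≤ D'.ncard) ∧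
      (∀ p : Pt, Elem.pt p ∈ D → (NElemSet R p ∪ HoverSet R p) ∩ D = ∅) ∧
      (∀ p : Pt, Elem.pt p ∈ D → p ∈ Pstar R) := by
  classical
  have hfin : R.elems.Finite := (R.finP.image _).union (R.finL.image _)
  -- every point of P has a hovering segment
  have hhover : ∀ p ∈ R.P, ∃ L, L ∈ R.Ls ∧ (∃ z ∈ L.carrier, z ∈ ptShadow p) ∧
      p ∉ setShadow L.carrier := by
    intro p hp
    obtain ⟨L, hL, hmem⟩ := hcan p hp
    rcases hmem with ⟨p', _, _, _, h⟩ | ⟨L', hL', hne, hns, heq⟩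
    · exact (Elem.noConfusion h)
    · have hLL : L = L' := by injection heq
      subst hLL
      exact ⟨L, hL', hne, hns⟩
  -- every point of P has a neighbouring segment
  have hnbr : ∀ p ∈ R.P, ∃ L, L ∈ R.Ls ∧ p ∈ setShadow L.carrier := by
    intro p hp
    obtain ⟨Lh, hLh, _, hns⟩ := hhover p hp
    have hv : Elem.pt p ∈ R.elems := Or.inl ⟨p, hp, rfl⟩
    have hw : Elem.seg Lh ∈ R.elems := Or.inr ⟨Lh, hLh, rfl⟩
    set v : R.elems := ⟨Elem.pt p, hv⟩
    set w : R.elems := ⟨Elem.seg Lh, hw⟩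
    have hvw : v ≠ w := by
      intro h
      exact absurd (congrArg Subtype.val h) (by simp [v, w])
    obtain ⟨walk⟩ := hconn.preconnected v w
    have hnil : ¬ walk.Nil := SimpleGraph.Walk.not_nil_of_ne hvw
    obtain ⟨u, hadj, _, _⟩ := SimpleGraph.Walk.not_nil_iff.1 hnil
    obtain ⟨hne', hadj'⟩ := hadj
    match u with
    | ⟨Elem.pt q, hq⟩ => exact hadj'.elim
    | ⟨Elem.seg L, hq⟩ =>
      refine ⟨L, ?_, hadj'⟩
      rcases hq with ⟨q', _, h⟩ | ⟨L', hL', h⟩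
      · cases h
      · cases h; exact hL'
  -- pick a dominating set minimizing the weighted count
  set M := R.elems.ncard with hM
  have hex : ∃ n : ℕ, ∃ D : Set Elem, D ⊆ R.elems ∧ Dominates D R.elems ∧
      (M + 1) * D.ncard + (D ∩ Set.range Elem.pt).ncard = n :=
    ⟨_, R.elems, subset_rfl, fun x hx => Or.inl hx, rfl⟩
  obtain ⟨D, hDsub, hDdom, hDval⟩ := Nat.find_spec hex
  have hmin : ∀ D' : Set Elem, D' ⊆ R.elems → Dominates D' R.elems →
      Nat.find hex ≤ (M + 1) * D'.ncard + (D' ∩ Set.range Elem.pt).ncard :=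
    fun D' h1 h2 => Nat.find_min' hex ⟨D', h1, h2, rfl⟩
  have himp : ∀ D' : Set Elem, D' ⊆ R.elems → Dominates D' R.elems →
      D'.ncard ≤ D.ncard →
      (D' ∩ Set.range Elem.pt).ncard < (D ∩ Set.range Elem.pt).ncard → False := by
    intro D' h1 h2 h3 h4
    have h5 := hmin D' h1 h2
    have h6 := Nat.mul_le_mul_left (M + 1) h3
    omega
  -- the two kill lemmas
  have kill1 : ∀ p : Pt, Elem.pt p ∈ D → ∀ L : HSeg, Elem.seg L ∈ D →
      ((∃ z ∈ L.carrier, z ∈ ptShadow p) ∨ p ∈ setShadow L.carrier) → False := by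
    intro p hpD L hLD hcase
    have hp : p ∈ R.P := elems_pt_mem (hDsub hpD)
    rcases hcase with hz | hmem
    · obtain ⟨L0, hL0, hpL0⟩ := hnbr p hp
      obtain ⟨D', h1, h2, h3, h4⟩ := swap_one R hfin hDsub hDdom hpD hL0
        ⟨Elem.seg L0, mem_insert _ _, hpL0⟩
        (mem_insert_of_mem _ (⟨hLD, by simp⟩ : Elem.seg L ∈ D \ {Elem.pt p})) hz
      exact himp D' h1 h2 h3 h4
    · obtain ⟨Lh, hLh, hzh, _⟩ := hhover p hp
      obtain ⟨D', h1, h2, h3, h4⟩ := swap_one R hfin hDsub hDdom hpD hLh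
        ⟨Elem.seg L, mem_insert_of_mem _ ⟨hLD, by simp⟩, hmem⟩
        (mem_insert _ _) hzh
      exact himp D' h1 h2 h3 h4
  have kill2 : ∀ a b : Pt, a ≠ b → Elem.pt a ∈ D → Elem.pt b ∈ D →
      a ∈ ptShadow b → False := by
    intro a b hab haD hbD hle
    have ha : a ∈ R.P := elems_pt_mem (hDsub haD)
    have hb : b ∈ R.P := elems_pt_mem (hDsub hbD)
    obtain ⟨L0, hL0, hbL0⟩ := hnbr b hb
    obtain ⟨Lh, hLh, hzh, _⟩ := hhover a ha
    obtain ⟨D', h1, h2, h3, h4⟩ := swap_two R hfin hDsub hDdom hab haD hbD hle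
      hL0 hbL0 hLh hzh
    exact himp D' h1 h2 h3 h4
  refine ⟨D, hDsub, hDdom, ?_, ?_, ?_⟩
  · -- minimum cardinality
    intro D' h1 h2
    have h5 := hmin D' h1 h2
    have hΦ : (D' ∩ Set.range Elem.pt).ncard ≤ M := by
      exact Set.ncard_le_ncard ((inter_subset_left).trans h1) hfin
    have h6 : (M + 1) * D.ncard < (M + 1) * (D'.ncard + 1) := by
      have : (M + 1) * (D'.ncard + 1) = (M + 1) * D'.ncard + (M + 1) := by ring
      omega
    have := Nat.lt_of_mul_lt_mul_left h6
    omega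
  · -- normalization: (N(p) ∪ H(p)) ∩ D = ∅
    intro p hpD
    ext x
    simp only [mem_inter_iff, mem_empty_iff_false, iff_false, not_and]
    intro hx hxD
    rcases hx with hN | hH
    · obtain ⟨L, hL, hpS, rfl⟩ := hN
      exact kill1 p hpD L hxD (Or.inr hpS)
    · rcases hH with ⟨p', hp', hne, hps, rfl⟩ | ⟨L, hL, hnz, hns, rfl⟩
      · exact kill2 p' p hne hxD hpD hps
      · obtain ⟨z, hz1, hz2⟩ := hnz
        exact kill1 p hpD L hxD (Or.inl ⟨z, hz1, hz2⟩)
  · -- D ∩ P ⊆ P*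
    intro p hpD
    have hp : p ∈ R.P := elems_pt_mem (hDsub hpD)
    refine ⟨hp, fun p' hp' hne hmem => ?_⟩
    by_cases hp'D : Elem.pt p' ∈ D
    · exact kill2 p p' (fun h => hne h.symm) hpD hp'D hmem
    · rcases hDdom (Elem.pt p') (Or.inl ⟨p', hp', rfl⟩) with h | ⟨d, hdD, hadj⟩
      · exact hp'D h
      · match d, hadj with
        | Elem.seg L, hadj =>
          exact kill1 p hpD L hdD (Or.inr (setShadow_down hmem hadj))
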